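/- arXiv:2212.00745 — 8 statements merged into one kernel-verified Lean document; each statement's English description precedes it below -/
import Mathlib

section
/- In any (θ₁, θ₂, …, θ_k)-representation of nK₃ with θ₁ < θ₂ < ⋯ < θ_k, no two distinct triangles have the same color, i.e., no two distinct triangles have the same multiset of colors on their edges. -/
open Finset

/-- The disjoint union of `n` copies of the complete graph `K_m`,
on vertex set `Fin n × Fin m`. -/
def copiesK (n m : ℕ) : SimpleGraph (Fin n × Fin m) where
  Adj x y := x.1 = y.1 ∧ x ≠ y
  symm := ⟨fun x y h => ⟨h.1.symm, h.2.symm⟩⟩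
  loopless := ⟨fun x h => h.2 rfl⟩

/-- The complete `n`-partite graph with `m` vertices in each part,
on vertex set `Fin n × Fin m`. -/
def completeMulti (n m : ℕ) : SimpleGraph (Fin n × Fin m) where
  Adj x y := x.1 ≠ y.1
  symm := ⟨fun x y h => h.symm⟩
  loopless := ⟨fun x h => h rfl⟩

/-- `r` together with the strictly increasing thresholds `θ₁ < ⋯ < θ_k` is a
`(θ₁, …, θ_k)`-representation of `G`: for distinct `u v`, `uv` is an edge iff the
number of thresholds not exceeding `r u + r v` is odd. -/
def IsRep {V : Type*} {k : ℕ} (G : SimpleGraph V) (θ : Fin k → ℝ) (r : V → ℝ) : Prop :=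
  StrictMono θ ∧ ∀ u v : V, u ≠ v →
    (G.Adj u v ↔ Odd (Finset.univ.filter (fun i => θ i ≤ r u + r v)).card)

/-- `G` is a `k`-threshold graph. -/
def IsKThreshold {V : Type*} (G : SimpleGraph V) (k : ℕ) : Prop :=
  ∃ (θ : Fin k → ℝ) (r : V → ℝ), IsRep G θ r

/-- The threshold number `Θ(G)`: the least `k` for which `G` is a `k`-threshold graph. -/
noncomputable def thresholdNumber {V : Type*} (G : SimpleGraph V) : ℕ :=
  sInf {k | IsKThreshold G k}

/-- The 1-based color of an edge with rank sum `s`: it equals `i` exactly when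
`s ∈ [θ_{2i-1}, θ_{2i})` (1-based indexing, with `θ_{k+1} = ∞`), i.e. when the number
of thresholds not exceeding `s` equals `2i - 1`. -/
noncomputable def edgeColor {k : ℕ} (θ : Fin k → ℝ) (s : ℝ) : ℕ :=
  ((Finset.univ.filter (fun i => θ i ≤ s)).card + 1) / 2

/-- The 1-based color of a nonedge with rank sum `s`: it equals `i` exactly when
`s ∈ [θ_{2i-2}, θ_{2i-1})` (1-based indexing, with `θ₀ = -∞`), i.e. when the number
of thresholds not exceeding `s` equals `2i - 2`. -/
noncomputable def nonedgeColor {k : ℕ} (θ : Fin k → ℝ) (s : ℝ) : ℕ :=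
  (Finset.univ.filter (fun i => θ i ≤ s)).card / 2 + 1

/-- The multiset of colors on the three edges of the `t`-th triangle of `nK₃`. -/
noncomputable def triColors3 {n k : ℕ} (θ : Fin k → ℝ) (r : Fin n × Fin 3 → ℝ) (t : Fin n) :
    Multiset ℕ :=
  {edgeColor θ (r (t, 0) + r (t, 1)), edgeColor θ (r (t, 0) + r (t, 2)),
    edgeColor θ (r (t, 1) + r (t, 2))}

/-- The multiset of colors on the three nonedges of the `t`-th part of `K_{n×3}`. -/
noncomputable def partColors3 {n k : ℕ} (θ : Fin k → ℝ) (r : Fin n × Fin 3 → ℝ) (t : Fin n) :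
    Multiset ℕ :=
  {nonedgeColor θ (r (t, 0) + r (t, 1)), nonedgeColor θ (r (t, 0) + r (t, 2)),
    nonedgeColor θ (r (t, 1) + r (t, 2))}


lemma ms12 {α : Type*} (x y z : α) : ({x, y, z} : Multiset α) = {y, x, z} := by
  simp only [Multiset.insert_eq_cons]
  exact Multiset.cons_swap x y {z}

lemma ms23 {α : Type*} (x y z : α) : ({x, y, z} : Multiset α) = {x, z, y} := by
  simp only [Multiset.insert_eq_cons, ← Multiset.cons_zero]
  rw [Multiset.cons_swap y z]

lemma triple_eq {p q r p' q' r' : ℕ} (hpq : p ≤ q) (hqr : q ≤ r)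
    (hpq' : p' ≤ q') (hqr' : q' ≤ r')
    (h : ({p, q, r} : Multiset ℕ) = {p', q', r'}) :
    p = p' ∧ q = q' ∧ r = r' := by
  have hs := congrArg Multiset.sum h
  simp at hs
  have hp : p ∈ ({p', q', r'} : Multiset ℕ) := by rw [← h]; simp
  have hr : r ∈ ({p', q', r'} : Multiset ℕ) := by rw [← h]; simp
  have hp' : p' ∈ ({p, q, r} : Multiset ℕ) := by rw [h]; simp
  have hr' : r' ∈ ({p, q, r} : Multiset ℕ) := by rw [h]; simp
  simp at hp hr hp' hr'
  omega

lemma sort3 (u v w : ℝ) : ∃ a b c : ℝ, a ≤ b ∧ b ≤ c ∧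
    ({a + b, a + c, b + c} : Multiset ℝ) = {u + v, u + w, v + w} ∧
    (a = u ∨ a = v ∨ a = w) ∧ (b = u ∨ b = v ∨ b = w) ∧ (c = u ∨ c = v ∨ c = w) := by
  rcases le_total u v with h1 | h1 <;> rcases le_total v w with h2 | h2 <;>
    rcases le_total u w with h3 | h3
  · exact ⟨u, v, w, h1, h2, rfl, by tauto, by tauto, by tauto⟩
  · exact ⟨u, v, w, h1, h2, rfl, by tauto, by tauto, by tauto⟩
  · refine ⟨u, w, v, h3, h2, ?_, by tauto, by tauto, by tauto⟩
    rw [add_comm w v, ms12 (u + w) (u + v) (v + w)]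
  · refine ⟨w, u, v, h3, h1, ?_, by tauto, by tauto, by tauto⟩
    rw [add_comm w u, add_comm w v, ms23 (u + w) (v + w) (u + v),
      ms12 (u + w) (u + v) (v + w)]
  · refine ⟨v, u, w, h1, h3, ?_, by tauto, by tauto, by tauto⟩
    rw [add_comm v u, ms23 (u + v) (v + w) (u + w)]
  · refine ⟨v, w, u, h2, h3, ?_, by tauto, by tauto, by tauto⟩
    rw [add_comm v u, add_comm w u, ms12 (v + w) (u + v) (u + w),
      ms23 (u + v) (v + w) (u + w)]
  · refine ⟨w, v, u, h2, h1, ?_, by tauto, by tauto, by tauto⟩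
    rw [add_comm w v, add_comm w u, add_comm v u, ms12 (v + w) (u + w) (u + v),
      ms23 (u + w) (v + w) (u + v), ms12 (u + w) (u + v) (v + w)]
  · refine ⟨w, v, u, h2, h1, ?_, by tauto, by tauto, by tauto⟩
    rw [add_comm w v, add_comm w u, add_comm v u, ms12 (v + w) (u + w) (u + v),
      ms23 (u + w) (v + w) (u + v), ms12 (u + w) (u + v) (v + w)]

/-- The number of thresholds not exceeding `s`. -/
noncomputable def Ncard {k : ℕ} (θ : Fin k → ℝ) (s : ℝ) : ℕ :=
  (Finset.univ.filter (fun i => θ i ≤ s)).card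

lemma Ncard_mono {k : ℕ} (θ : Fin k → ℝ) : Monotone (Ncard θ) := by
  intro s t hst
  apply Finset.card_le_card
  intro i hi
  simp only [Finset.mem_filter, Finset.mem_univ, true_and] at *
  linarith

lemma edgeColor_eq {k : ℕ} (θ : Fin k → ℝ) (s : ℝ) :
    edgeColor θ s = (Ncard θ s + 1) / 2 := rfl

lemma edgeColor_mono {k : ℕ} (θ : Fin k → ℝ) : Monotone (edgeColor θ) := by
  intro s t hst
  rw [edgeColor_eq, edgeColor_eq]
  exact Nat.div_le_div_right (Nat.add_le_add_right (Ncard_mono θ hst) 1)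

lemma key_aux {k : ℕ} (θ : Fin k → ℝ) (a b c x y z : ℝ)
    (hxy : x ≤ y) (hyz : y ≤ z) (hzc : z ≤ c)
    (oab : Odd (Ncard θ (a + b))) (oxz : Odd (Ncard θ (x + z))) (oyz : Odd (Ncard θ (y + z)))
    (ebz : Even (Ncard θ (b + z))) (eaz : Even (Ncard θ (a + z))) (eay : Even (Ncard θ (a + y)))
    (e1 : Ncard θ (a + b) = Ncard θ (x + y)) (e2 : Ncard θ (a + c) = Ncard θ (x + z))
    (e3 : Ncard θ (b + c) = Ncard θ (y + z)) : False := by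
  have hmono := Ncard_mono θ
  obtain ⟨m1, hm1⟩ := oyz
  obtain ⟨m2, hm2⟩ := ebz
  obtain ⟨m3, hm3⟩ := oxz
  obtain ⟨m4, hm4⟩ := eaz
  obtain ⟨m5, hm5⟩ := oab
  obtain ⟨m6, hm6⟩ := eay
  have hby : b < y := by
    by_contra hcon
    push_neg at hcon
    have h1 : Ncard θ (b + z) ≤ Ncard θ (b + c) := hmono (by linarith)
    have h2 : Ncard θ (y + z) ≤ Ncard θ (b + z) := hmono (by linarith)
    omega
  have hax : a < x := by
    by_contra hcon
    push_neg at hcon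
    have h1 : Ncard θ (a + z) ≤ Ncard θ (a + c) := hmono (by linarith)
    have h2 : Ncard θ (x + z) ≤ Ncard θ (a + z) := hmono (by linarith)
    omega
  have h3 : Ncard θ (a + y) ≤ Ncard θ (x + y) := hmono (by linarith)
  have h4 : Ncard θ (a + b) ≤ Ncard θ (a + y) := hmono (by linarith)
  omega

/-- In any `(θ₁, …, θ_k)`-representation of `nK₃`, no two distinct triangles have
the same multiset of colors on their edges. -/
theorem stmt5 (n k : ℕ) (θ : Fin k → ℝ) (r : Fin n × Fin 3 → ℝ)
    (hrep : IsRep (copiesK n 3) θ r) :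
    ∀ t₁ t₂ : Fin n, t₁ ≠ t₂ → triColors3 θ r t₁ ≠ triColors3 θ r t₂ := by
  intro t₁ t₂ hne hcol
  -- parity facts
  have hodd : ∀ (t : Fin n) (i j : Fin 3), i ≠ j → Odd (Ncard θ (r (t, i) + r (t, j))) := by
    intro t i j hij
    have hadj : (copiesK n 3).Adj (t, i) (t, j) :=
      ⟨rfl, fun h => hij (congrArg Prod.snd h)⟩
    exact (hrep.2 (t, i) (t, j) (fun h => hij (congrArg Prod.snd h))).mp hadj
  have heven : ∀ (i j : Fin 3), Even (Ncard θ (r (t₁, i) + r (t₂, j))) := by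
    intro i j
    have hnadj : ¬ (copiesK n 3).Adj (t₁, i) (t₂, j) := fun h => hne h.1
    have := hrep.2 (t₁, i) (t₂, j) (fun h => hne (congrArg Prod.fst h))
    rw [← Nat.not_odd_iff_even]
    exact fun ho => hnadj (this.mpr ho)
  have hO : ∀ (t : Fin n) (s : ℝ),
      s = r (t, 0) + r (t, 1) ∨ s = r (t, 0) + r (t, 2) ∨ s = r (t, 1) + r (t, 2) →
      Odd (Ncard θ s) := by
    rintro t s (rfl | rfl | rfl)
    exacts [hodd t 0 1 (by decide), hodd t 0 2 (by decide), hodd t 1 2 (by decide)]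
  have hE : ∀ p q : ℝ, (p = r (t₁, 0) ∨ p = r (t₁, 1) ∨ p = r (t₁, 2)) →
      (q = r (t₂, 0) ∨ q = r (t₂, 1) ∨ q = r (t₂, 2)) → Even (Ncard θ (p + q)) := by
    rintro p q (rfl | rfl | rfl) (rfl | rfl | rfl) <;> exact heven _ _
  have hE' : ∀ q p : ℝ, (q = r (t₂, 0) ∨ q = r (t₂, 1) ∨ q = r (t₂, 2)) →
      (p = r (t₁, 0) ∨ p = r (t₁, 1) ∨ p = r (t₁, 2)) → Even (Ncard θ (q + p)) := by
    intro q p hq hp; rw [add_comm]; exact hE p q hp hq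
  -- sorted ranks
  obtain ⟨a, b, c, hab, hbc, hsum1, ha, hb, hc⟩ := sort3 (r (t₁, 0)) (r (t₁, 1)) (r (t₁, 2))
  obtain ⟨x, y, z, hxy, hyz, hsum2, hx, hy, hz⟩ := sort3 (r (t₂, 0)) (r (t₂, 1)) (r (t₂, 2))
  -- odd facts on the six sorted triangle sums
  have dab : a + b = r (t₁, 0) + r (t₁, 1) ∨ a + b = r (t₁, 0) + r (t₁, 2) ∨
      a + b = r (t₁, 1) + r (t₁, 2) := by
    have : a + b ∈ ({r (t₁, 0) + r (t₁, 1), r (t₁, 0) + r (t₁, 2),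
        r (t₁, 1) + r (t₁, 2)} : Multiset ℝ) := by rw [← hsum1]; simp
    simpa using this
  have dac : a + c = r (t₁, 0) + r (t₁, 1) ∨ a + c = r (t₁, 0) + r (t₁, 2) ∨
      a + c = r (t₁, 1) + r (t₁, 2) := by
    have : a + c ∈ ({r (t₁, 0) + r (t₁, 1), r (t₁, 0) + r (t₁, 2),
        r (t₁, 1) + r (t₁, 2)} : Multiset ℝ) := by rw [← hsum1]; simp
    simpa using this
  have dbc : b + c = r (t₁, 0) + r (t₁, 1) ∨ b + c = r (t₁, 0) + r (t₁, 2) ∨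
      b + c = r (t₁, 1) + r (t₁, 2) := by
    have : b + c ∈ ({r (t₁, 0) + r (t₁, 1), r (t₁, 0) + r (t₁, 2),
        r (t₁, 1) + r (t₁, 2)} : Multiset ℝ) := by rw [← hsum1]; simp
    simpa using this
  have dxy : x + y = r (t₂, 0) + r (t₂, 1) ∨ x + y = r (t₂, 0) + r (t₂, 2) ∨
      x + y = r (t₂, 1) + r (t₂, 2) := by
    have : x + y ∈ ({r (t₂, 0) + r (t₂, 1), r (t₂, 0) + r (t₂, 2),
        r (t₂, 1) + r (t₂, 2)} : Multiset ℝ) := by rw [← hsum2]; simp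
    simpa using this
  have dxz : x + z = r (t₂, 0) + r (t₂, 1) ∨ x + z = r (t₂, 0) + r (t₂, 2) ∨
      x + z = r (t₂, 1) + r (t₂, 2) := by
    have : x + z ∈ ({r (t₂, 0) + r (t₂, 1), r (t₂, 0) + r (t₂, 2),
        r (t₂, 1) + r (t₂, 2)} : Multiset ℝ) := by rw [← hsum2]; simp
    simpa using this
  have dyz : y + z = r (t₂, 0) + r (t₂, 1) ∨ y + z = r (t₂, 0) + r (t₂, 2) ∨
      y + z = r (t₂, 1) + r (t₂, 2) := by
    have : y + z ∈ ({r (t₂, 0) + r (t₂, 1), r (t₂, 0) + r (t₂, 2),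
        r (t₂, 1) + r (t₂, 2)} : Multiset ℝ) := by rw [← hsum2]; simp
    simpa using this
  have oab := hO t₁ _ dab
  have oac := hO t₁ _ dac
  have obc := hO t₁ _ dbc
  have oxy := hO t₂ _ dxy
  have oxz := hO t₂ _ dxz
  have oyz := hO t₂ _ dyz
  -- colors multiset equality on sorted sums
  have hcols : ({edgeColor θ (a + b), edgeColor θ (a + c), edgeColor θ (b + c)} : Multiset ℕ)
      = {edgeColor θ (x + y), edgeColor θ (x + z), edgeColor θ (y + z)} := by
    have h1 := congrArg (Multiset.map (edgeColor θ)) hsum1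
    have h2 := congrArg (Multiset.map (edgeColor θ)) hsum2
    simp only [Multiset.insert_eq_cons, Multiset.map_cons, Multiset.map_singleton] at h1 h2
    unfold triColors3 at hcol
    simp only [Multiset.insert_eq_cons] at hcol
    exact h1.trans (hcol.trans h2.symm)
  have s1 : edgeColor θ (a + b) ≤ edgeColor θ (a + c) := edgeColor_mono θ (by linarith)
  have s2 : edgeColor θ (a + c) ≤ edgeColor θ (b + c) := edgeColor_mono θ (by linarith)
  have s1' : edgeColor θ (x + y) ≤ edgeColor θ (x + z) := edgeColor_mono θ (by linarith)
  have s2' : edgeColor θ (x + z) ≤ edgeColor θ (y + z) := edgeColor_mono θ (by linarith)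
  obtain ⟨E1, E2, E3⟩ := triple_eq s1 s2 s1' s2' hcols
  rw [edgeColor_eq, edgeColor_eq] at E1 E2 E3
  have n1 : Ncard θ (a + b) = Ncard θ (x + y) := by
    obtain ⟨m, hm⟩ := oab; obtain ⟨m', hm'⟩ := oxy; omega
  have n2 : Ncard θ (a + c) = Ncard θ (x + z) := by
    obtain ⟨m, hm⟩ := oac; obtain ⟨m', hm'⟩ := oxz; omega
  have n3 : Ncard θ (b + c) = Ncard θ (y + z) := by
    obtain ⟨m, hm⟩ := obc; obtain ⟨m', hm'⟩ := oyz; omega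
  rcases le_total z c with h | h
  · exact key_aux θ a b c x y z hxy hyz h oab oxz oyz
      (hE b z hb hz) (hE a z ha hz) (hE a y ha hy) n1 n2 n3
  · exact key_aux θ x y z a b c hab hbc h oxy oac obc
      (hE' y c hy hc) (hE' x c hx hc) (hE' x b hx hb) n1.symm n2.symm n3.symm
end

section
/- In any (θ₁, θ₂, …, θ_k)-representation of nK₃ with θ₁ < θ₂ < ⋯ < θ_k, for any colors i, j, ℓ ∈ {1, 2, …, ⌈k/2⌉}, there do not exist two distinct triangles such that one has color ijj and the other has color iℓℓ. -/
open Finset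

lemma mem3 {a b c i j : ℕ} (h : ({a, b, c} : Multiset ℕ) = {i, j, j}) :
    (a = i ∧ b = j ∧ c = j) ∨ (b = i ∧ a = j ∧ c = j) ∨ (c = i ∧ a = j ∧ b = j) := by
  have hci := congrArg (Multiset.count i) h
  have hcj := congrArg (Multiset.count j) h
  simp only [Multiset.insert_eq_cons, Multiset.count_cons, Multiset.count_singleton] at hci hcj
  split_ifs at hci hcj <;> omega

lemma core3 (f : ℝ → ℕ) (hf : Monotone f) (A B C X Y Z : ℝ)
    (h1 : f (B + C) = f (Y + Z)) (h2 : f (A + B) = f (A + C)) (h3 : f (X + Y) = f (X + Z))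
    (o1 : Odd (f (B + C))) (o2 : Odd (f (A + B))) (o3 : Odd (f (X + Y)))
    (e1 : Even (f (B + Y))) (e2 : Even (f (B + Z)))
    (e3 : Even (f (C + Y))) (e4 : Even (f (C + Z)))
    (e5 : Even (f (A + Y))) (e7 : Even (f (B + X))) : False := by
  have hm1 := min_le_left (B+C) (Y+Z)
  have hm2 := min_le_right (B+C) (Y+Z)
  have hM1 := le_max_left (B+C) (Y+Z)
  have hM2 := le_max_right (B+C) (Y+Z)
  have hsum : min (B+C) (Y+Z) + max (B+C) (Y+Z) = (B+C) + (Y+Z) := min_add_max _ _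
  have notin : ∀ u : ℝ, Even (f u) → u < min (B+C) (Y+Z) ∨ max (B+C) (Y+Z) < u := by
    intro u hu
    by_contra hcon
    push_neg at hcon
    have hu1 : f (B+C) ≤ f u ∧ f u ≤ f (B+C) := by
      rcases le_total (B+C) (Y+Z) with h | h
      · rw [min_eq_left h, max_eq_right h] at hcon
        exact ⟨hf hcon.1, by rw [h1]; exact hf hcon.2⟩
      · rw [min_eq_right h, max_eq_left h] at hcon
        exact ⟨by rw [h1]; exact hf hcon.1, hf hcon.2⟩
    have heq : f u = f (B+C) := le_antisymm hu1.2 hu1.1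
    rw [heq] at hu
    exact (Nat.not_even_iff_odd.mpr o1) hu
  have diag : ∀ u v : ℝ, u + v = (B+C) + (Y+Z) → Even (f u) → Even (f v) →
      (u < min (B+C) (Y+Z) ∧ max (B+C) (Y+Z) < v) ∨
      (v < min (B+C) (Y+Z) ∧ max (B+C) (Y+Z) < u) := by
    intro u v hs hu hv
    rcases notin u hu with h | h
    · left; exact ⟨h, by linarith⟩
    · right; exact ⟨by linarith, h⟩
  rcases diag (B+Y) (C+Z) (by ring) e1 e4 with ⟨p1, p2⟩ | ⟨p1, p2⟩
  · rcases diag (B+Z) (C+Y) (by ring) e2 e3 with ⟨q1, q2⟩ | ⟨q1, q2⟩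
    · have hA : f (A+Y) = f (A+B) :=
        le_antisymm (by rw [h2]; exact hf (by linarith)) (hf (by linarith))
      exact (Nat.not_even_iff_odd.mpr o2) (hA ▸ e5)
    · have hB : f (B+X) = f (X+Y) :=
        le_antisymm (by rw [h3]; exact hf (by linarith)) (hf (by linarith))
      exact (Nat.not_even_iff_odd.mpr o3) (hB ▸ e7)
  · rcases diag (B+Z) (C+Y) (by ring) e2 e3 with ⟨q1, q2⟩ | ⟨q1, q2⟩
    · have hB : f (B+X) = f (X+Y) :=
        le_antisymm (hf (by linarith)) (by rw [h3]; exact hf (by linarith))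
      exact (Nat.not_even_iff_odd.mpr o3) (hB ▸ e7)
    · have hA : f (A+Y) = f (A+B) :=
        le_antisymm (hf (by linarith)) (by rw [h2]; exact hf (by linarith))
      exact (Nat.not_even_iff_odd.mpr o2) (hA ▸ e5)


/-- In any `(θ₁, …, θ_k)`-representation of `nK₃`, for colors
`i, j, ℓ ∈ {1, …, ⌈k/2⌉}`, there do not exist two distinct triangles, one of color
`ijj` and the other of color `iℓℓ`. -/
theorem stmt7 (n k : ℕ) (θ : Fin k → ℝ) (r : Fin n × Fin 3 → ℝ)
    (hrep : IsRep (copiesK n 3) θ r) (i j l : ℕ)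
    (hi1 : 1 ≤ i) (hi2 : i ≤ (k + 1) / 2)
    (hj1 : 1 ≤ j) (hj2 : j ≤ (k + 1) / 2)
    (hl1 : 1 ≤ l) (hl2 : l ≤ (k + 1) / 2) :
    ¬ ∃ t₁ t₂ : Fin n, t₁ ≠ t₂ ∧
        triColors3 θ r t₁ = {i, j, j} ∧ triColors3 θ r t₂ = {i, l, l} := by
  rintro ⟨t₁, t₂, htne, hc1, hc2⟩
  have hedge : ∀ (t : Fin n) (p q : Fin 3), p ≠ q →
      Odd ((Finset.univ.filter (fun m : Fin k => θ m ≤ r (t, p) + r (t, q))).card) := by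
    intro t p q hpq
    have hne' : ((t, p) : Fin n × Fin 3) ≠ (t, q) := fun h => hpq (congrArg Prod.snd h)
    exact (hrep.2 _ _ hne').mp ⟨rfl, hne'⟩
  have hnonedge : ∀ (p q : Fin 3),
      Even ((Finset.univ.filter (fun m : Fin k => θ m ≤ r (t₁, p) + r (t₂, q))).card) := by
    intro p q
    have hne' : ((t₁, p) : Fin n × Fin 3) ≠ (t₂, q) := fun h => htne (congrArg Prod.fst h)
    have hna : ¬ (copiesK n 3).Adj (t₁, p) (t₂, q) := fun h => htne h.1
    rw [hrep.2 _ _ hne'] at hna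
    exact Nat.not_odd_iff_even.mp hna
  have hval : ∀ (s : ℝ) (m : ℕ),
      Odd ((Finset.univ.filter (fun i : Fin k => θ i ≤ s)).card) → edgeColor θ s = m →
      (Finset.univ.filter (fun i : Fin k => θ i ≤ s)).card = 2 * m - 1 := by
    intro s m ho he
    rw [Nat.odd_iff] at ho
    unfold edgeColor at he
    omega
  have comm : ∀ x y : ℝ,
      (Finset.univ.filter (fun m : Fin k => θ m ≤ x + y)).card
        = (Finset.univ.filter (fun m : Fin k => θ m ≤ y + x)).card := by
    intro x y; rw [add_comm]
  have extract : ∀ (t : Fin n) (ii jj : ℕ), triColors3 θ r t = {ii, jj, jj} →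
      ∃ a b c : Fin 3,
        (Finset.univ.filter (fun m : Fin k => θ m ≤ r (t, b) + r (t, c))).card = 2 * ii - 1 ∧
        (Finset.univ.filter (fun m : Fin k => θ m ≤ r (t, a) + r (t, b))).card = 2 * jj - 1 ∧
        (Finset.univ.filter (fun m : Fin k => θ m ≤ r (t, a) + r (t, c))).card = 2 * jj - 1 := by
    intro t ii jj h
    unfold triColors3 at h
    rcases mem3 h with ⟨f1, f2, f3⟩ | ⟨f1, f2, f3⟩ | ⟨f1, f2, f3⟩
    · refine ⟨2, 0, 1, hval _ _ (hedge t 0 1 (by decide)) f1, ?_, ?_⟩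
      · rw [comm]; exact hval _ _ (hedge t 0 2 (by decide)) f2
      · rw [comm]; exact hval _ _ (hedge t 1 2 (by decide)) f3
    · refine ⟨1, 0, 2, hval _ _ (hedge t 0 2 (by decide)) f1, ?_, ?_⟩
      · rw [comm]; exact hval _ _ (hedge t 0 1 (by decide)) f2
      · exact hval _ _ (hedge t 1 2 (by decide)) f3
    · exact ⟨0, 1, 2, hval _ _ (hedge t 1 2 (by decide)) f1,
        hval _ _ (hedge t 0 1 (by decide)) f2, hval _ _ (hedge t 0 2 (by decide)) f3⟩
  obtain ⟨a, b, c, k1, k2, k3⟩ := extract t₁ i j hc1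
  obtain ⟨a', b', c', m1, m2, m3⟩ := extract t₂ i l hc2
  have hmono : Monotone (fun s : ℝ => (Finset.univ.filter (fun m : Fin k => θ m ≤ s)).card) := by
    intro s t hst
    apply Finset.card_le_card
    intro m hm
    simp only [Finset.mem_filter, Finset.mem_univ, true_and] at *
    exact hm.trans hst
  have o1 : Odd ((Finset.univ.filter (fun m : Fin k => θ m ≤ r (t₁, b) + r (t₁, c))).card) := by
    rw [k1, Nat.odd_iff]; omega
  have o2 : Odd ((Finset.univ.filter (fun m : Fin k => θ m ≤ r (t₁, a) + r (t₁, b))).card) := by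
    rw [k2, Nat.odd_iff]; omega
  have o3 : Odd ((Finset.univ.filter (fun m : Fin k => θ m ≤ r (t₂, a') + r (t₂, b'))).card) := by
    rw [m2, Nat.odd_iff]; omega
  exact core3 (fun s : ℝ => (Finset.univ.filter (fun m : Fin k => θ m ≤ s)).card) hmono
    (r (t₁, a)) (r (t₁, b)) (r (t₁, c)) (r (t₂, a')) (r (t₂, b')) (r (t₂, c'))
    (k1.trans m1.symm) (k2.trans k3.symm) (m2.trans m3.symm)
    o1 o2 o3
    (hnonedge b b') (hnonedge b c') (hnonedge c b') (hnonedge c c')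
    (hnonedge a b') (hnonedge b a')
end

section
/- If in some (θ₁, …, θ_k)-representation of K_{n×3} the nonedges are colored with at most m colors, then n ≤ m + C(m,3). In particular, if K_{n×3} is a k-threshold graph, then n ≤ ⌈(k+1)/2⌉ + C(⌈(k+1)/2⌉, 3). -/
open Finset

/- ======================  Auxiliary material  ====================== -/

lemma stmt10_odd_even_ne {x y : ℕ} (hx : Odd x) (hy : Even y) : x ≠ y := by
  rcases hx with ⟨p, hp⟩; rcases hy with ⟨q, hq⟩; omega

lemma stmt10_even_eq_of_color {x y : ℕ} (hx : Even x) (hy : Even y)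
    (h : x / 2 + 1 = y / 2 + 1) : x = y := by
  rcases hx with ⟨p, hp⟩; rcases hy with ⟨q, hq⟩; omega

lemma stmt10_sort3 (x : Fin 3 → ℝ) :
    ∃ i j l : Fin 3, i ≠ j ∧ i ≠ l ∧ j ≠ l ∧ x i ≤ x j ∧ x j ≤ x l := by
  rcases le_total (x 0) (x 1) with h01 | h01 <;>
    rcases le_total (x 1) (x 2) with h12 | h12 <;>
      rcases le_total (x 0) (x 2) with h02 | h02
  · exact ⟨0, 1, 2, by decide, by decide, by decide, h01, h12⟩
  · exact ⟨0, 1, 2, by decide, by decide, by decide, h01, h12⟩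
  · exact ⟨0, 2, 1, by decide, by decide, by decide, h02, h12⟩
  · exact ⟨2, 0, 1, by decide, by decide, by decide, h02, h01⟩
  · exact ⟨1, 0, 2, by decide, by decide, by decide, h01, h02⟩
  · exact ⟨1, 2, 0, by decide, by decide, by decide, h12, h02⟩
  · exact ⟨2, 1, 0, by decide, by decide, by decide, h12, h01⟩
  · exact ⟨2, 1, 0, by decide, by decide, by decide, h12, h01⟩

section Master

variable {F : ℝ → ℕ}

lemma stmt10_mono_lt (hF : Monotone F) {x y : ℝ} (h : F x < F y) : x < y :=
  lt_of_not_ge fun hle => h.not_ge (hF hle)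

lemma stmt10_cllow (hF : Monotone F) {u v s t : ℝ} (h : u + v ≤ s + t)
    (h1 : F s < F u) (h2 : F t < F u) : F v ≤ F s ∧ F v ≤ F t := by
  have hsu := stmt10_mono_lt hF h1
  have htu := stmt10_mono_lt hF h2
  exact ⟨hF (by linarith), hF (by linarith)⟩

lemma stmt10_clhigh (hF : Monotone F) {u v s t : ℝ} (h : s + t ≤ u + v)
    (h1 : F u < F s) (h2 : F u < F t) : F s ≤ F v ∧ F t ≤ F v := by
  have hsu := stmt10_mono_lt hF h1
  have htu := stmt10_mono_lt hF h2
  exact ⟨hF (by linarith), hF (by linarith)⟩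

/-- Configuration of two parts of `K_{n×3}` with sorted ranks. -/
structure Stmt10Cfg (F : ℝ → ℕ) (a1 a2 a3 b1 b2 b3 : ℝ) : Prop where
  mono : Monotone F
  ha12 : a1 ≤ a2
  ha23 : a2 ≤ a3
  hb12 : b1 ≤ b2
  hb23 : b2 ≤ b3
  ea12 : Even (F (a1 + a2))
  ea13 : Even (F (a1 + a3))
  ea23 : Even (F (a2 + a3))
  eb12 : Even (F (b1 + b2))
  eb13 : Even (F (b1 + b3))
  eb23 : Even (F (b2 + b3))
  o12 : Odd (F (a1 + b2))
  o13 : Odd (F (a1 + b3))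
  o21 : Odd (F (a2 + b1))
  o22 : Odd (F (a2 + b2))
  o23 : Odd (F (a2 + b3))
  o31 : Odd (F (a3 + b1))
  o32 : Odd (F (a3 + b2))
  o33 : Odd (F (a3 + b3))

variable {a1 a2 a3 b1 b2 b3 : ℝ}

lemma Stmt10Cfg.swap (c : Stmt10Cfg F a1 a2 a3 b1 b2 b3) :
    Stmt10Cfg F b1 b2 b3 a1 a2 a3 where
  mono := c.mono
  ha12 := c.hb12
  ha23 := c.hb23
  hb12 := c.ha12
  hb23 := c.ha23
  ea12 := c.eb12
  ea13 := c.eb13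
  ea23 := c.eb23
  eb12 := c.ea12
  eb13 := c.ea13
  eb23 := c.ea23
  o12 := by rw [add_comm]; exact c.o21
  o13 := by rw [add_comm]; exact c.o31
  o21 := by rw [add_comm]; exact c.o12
  o22 := by rw [add_comm]; exact c.o22
  o23 := by rw [add_comm]; exact c.o32
  o31 := by rw [add_comm]; exact c.o13
  o32 := by rw [add_comm]; exact c.o23
  o33 := by rw [add_comm]; exact c.o33

/-- Two parts with equal sorted triples of nonedge `F`-values: impossible
(branch `F(a2+b1) < F(a1+a2)`). -/
lemma stmt10_eqT_aux (c : Stmt10Cfg F a1 a2 a3 b1 b2 b3)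
    (h1 : F (a1 + a2) = F (b1 + b2)) (h2 : F (a1 + a3) = F (b1 + b3))
    (h3 : F (a2 + a3) = F (b2 + b3))
    (hbr : F (a2 + b1) < F (a1 + a2)) : False := by
  have hF := c.mono
  -- step 1 : F (a1+b3) > F (a1+a3)
  have s1 : F (a1 + a3) < F (a1 + b3) := by
    have hle : F (b1 + b3) ≤ F (a1 + b3) :=
      (stmt10_clhigh hF (u := a2 + b1) (v := a1 + b3) (s := a1 + a2) (t := b1 + b3)
        (by linarith) hbr
        (lt_of_lt_of_le (h1 ▸ hbr) (hF (by linarith [c.hb23])))).2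
    rw [← h2] at hle
    exact lt_of_le_of_ne hle (stmt10_odd_even_ne c.o13 c.ea13).symm
  -- step 2 : F (a3+b1) < F (a1+a3)
  have s2 : F (a3 + b1) < F (a1 + a3) := by
    have hle : F (a3 + b1) ≤ F (a1 + a3) :=
      (stmt10_cllow hF (u := a1 + b3) (v := a3 + b1) (s := a1 + a3) (t := b1 + b3)
        (by linarith) s1 (h2 ▸ s1)).1
    exact lt_of_le_of_ne hle (stmt10_odd_even_ne c.o31 c.ea13)
  -- step 3 : F (a2+b3) > F (a2+a3)
  have s3 : F (a2 + a3) < F (a2 + b3) := by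
    have hle : F (a2 + a3) ≤ F (a2 + b3) :=
      (stmt10_clhigh hF (u := a3 + b1) (v := a2 + b3) (s := a2 + a3) (t := b1 + b3)
        (by linarith) (lt_of_lt_of_le s2 (hF (by linarith [c.ha12]))) (h2 ▸ s2)).1
    exact lt_of_le_of_ne hle (stmt10_odd_even_ne c.o23 c.ea23).symm
  -- step 4 : F (a3+b2) < F (a2+a3), hence b2 < a2
  have s4 : F (a3 + b2) < F (a2 + a3) := by
    have hle : F (a3 + b2) ≤ F (a2 + a3) :=
      (stmt10_cllow hF (u := a2 + b3) (v := a3 + b2) (s := a2 + a3) (t := b2 + b3)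
        (by linarith) s3 (h3 ▸ s3)).1
    exact lt_of_le_of_ne hle (stmt10_odd_even_ne c.o32 c.ea23)
  have hb2a2 : b2 < a2 := by
    have := stmt10_mono_lt hF s4
    linarith
  -- step 5 : F (a1+b2) > F (a1+a2), hence a2 < b2, contradiction
  have s5 : F (a1 + a2) < F (a1 + b2) := by
    have hle : F (a1 + a2) ≤ F (a1 + b2) :=
      (stmt10_clhigh hF (u := a2 + b1) (v := a1 + b2) (s := a1 + a2) (t := b1 + b2)
        (by linarith) hbr (h1 ▸ hbr)).1
    exact lt_of_le_of_ne hle (stmt10_odd_even_ne c.o12 c.ea12).symm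
  have : a2 < b2 := by
    have := stmt10_mono_lt hF s5
    linarith
  linarith

/-- Two parts with equal sorted triples of nonedge `F`-values: impossible. -/
lemma stmt10_eqT (c : Stmt10Cfg F a1 a2 a3 b1 b2 b3)
    (h1 : F (a1 + a2) = F (b1 + b2)) (h2 : F (a1 + a3) = F (b1 + b3))
    (h3 : F (a2 + a3) = F (b2 + b3)) : False := by
  have hF := c.mono
  rcases lt_trichotomy (F (a2 + b1)) (F (a1 + a2)) with hbr | heq | hbr
  · exact stmt10_eqT_aux c h1 h2 h3 hbr
  · exact stmt10_odd_even_ne c.o21 c.ea12 heq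
  · -- then F (a1+b2) < F (b1+b2); apply aux with the parts swapped
    have hlt : F (a1 + b2) < F (b1 + b2) := by
      have hle : F (a1 + b2) ≤ F (a1 + a2) :=
        (stmt10_cllow hF (u := a2 + b1) (v := a1 + b2) (s := a1 + a2) (t := b1 + b2)
          (by linarith) hbr (h1 ▸ hbr)).1
      rw [h1] at hle
      exact lt_of_le_of_ne hle (stmt10_odd_even_ne c.o12 c.eb12)
    refine stmt10_eqT_aux c.swap h1.symm h2.symm h3.symm ?_
    rw [add_comm b2 a1]
    exact hlt

/-- Both parts have their two smallest nonedge `F`-values equal, and the same top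
value: impossible (branch `F(b2+b3) < F(a2+b3)`). -/
lemma stmt10_TT_aux (c : Stmt10Cfg F a1 a2 a3 b1 b2 b3)
    (hB : F (b1 + b2) = F (b1 + b3))
    (hσ : F (a2 + a3) = F (b2 + b3))
    (hbr : F (b2 + b3) < F (a2 + b3)) : False := by
  have hF := c.mono
  -- F (a3+b1) < F (b1+b2), hence a3 < b2
  have s1 : F (a3 + b1) < F (b1 + b2) := by
    have hle : F (a3 + b1) ≤ F (b1 + b3) :=
      (stmt10_cllow hF (u := a2 + b3) (v := a3 + b1) (s := a2 + a3) (t := b1 + b3)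
        (by linarith) (hσ ▸ hbr) (lt_of_le_of_lt (hF (by linarith [c.hb12])) hbr)).2
    rw [← hB] at hle
    exact lt_of_le_of_ne hle (stmt10_odd_even_ne c.o31 c.eb12)
  have ha3b2 : a3 < b2 := by
    have := stmt10_mono_lt hF s1
    linarith
  -- F (a3+b2) < F (a2+a3), hence b2 < a2 ≤ a3 : contradiction
  have s2 : F (a3 + b2) < F (a2 + a3) := by
    have hle : F (a3 + b2) ≤ F (a2 + a3) :=
      (stmt10_cllow hF (u := a2 + b3) (v := a3 + b2) (s := a2 + a3) (t := b2 + b3)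
        (by linarith) (hσ ▸ hbr) hbr).1
    exact lt_of_le_of_ne hle (stmt10_odd_even_ne c.o32 c.ea23)
  have : b2 < a2 := by
    have := stmt10_mono_lt hF s2
    linarith
  linarith [c.ha23]

/-- Both parts have their two smallest nonedge `F`-values equal, and the same top
value: impossible. -/
lemma stmt10_TT (c : Stmt10Cfg F a1 a2 a3 b1 b2 b3)
    (hA : F (a1 + a2) = F (a1 + a3)) (hB : F (b1 + b2) = F (b1 + b3))
    (hσ : F (a2 + a3) = F (b2 + b3)) : False := by
  have hF := c.mono
  rcases lt_trichotomy (F (a2 + b3)) (F (b2 + b3)) with hbr | heq | hbr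
  · -- F (a3+b2) > F (a2+a3); swap parts
    have hlt : F (a2 + a3) < F (a3 + b2) := by
      have hle : F (a2 + a3) ≤ F (a3 + b2) :=
        (stmt10_clhigh hF (u := a2 + b3) (v := a3 + b2) (s := a2 + a3) (t := b2 + b3)
          (by linarith) (hσ ▸ hbr) hbr).1
      exact lt_of_le_of_ne hle (stmt10_odd_even_ne c.o32 c.ea23).symm
    refine stmt10_TT_aux c.swap hA hσ.symm ?_
    rw [add_comm b2 a3]
    exact hlt
  · exact stmt10_odd_even_ne c.o23 c.eb23 heq
  · exact stmt10_TT_aux c hB hσ hbr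

/-- Both parts have their two largest nonedge `F`-values equal, and the same bottom
value: impossible (branch `F(a2+b1) < F(a1+a2)`). -/
lemma stmt10_BoBo_aux (c : Stmt10Cfg F a1 a2 a3 b1 b2 b3)
    (hB : F (b1 + b3) = F (b2 + b3))
    (hσ : F (a1 + a2) = F (b1 + b2))
    (hbr : F (a2 + b1) < F (a1 + a2)) : False := by
  have hF := c.mono
  -- F (a1+b3) > F (b2+b3), hence a1 > b2
  have s1 : F (b2 + b3) < F (a1 + b3) := by
    have hle : F (b1 + b3) ≤ F (a1 + b3) :=
      (stmt10_clhigh hF (u := a2 + b1) (v := a1 + b3) (s := a1 + a2) (t := b1 + b3)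
        (by linarith) hbr (lt_of_lt_of_le (hσ ▸ hbr) (hF (by linarith [c.hb23])))).2
    rw [hB] at hle
    exact lt_of_le_of_ne hle (stmt10_odd_even_ne c.o13 c.eb23).symm
  have hb2a1 : b2 < a1 := by
    have := stmt10_mono_lt hF s1
    linarith
  -- F (a1+b2) > F (a1+a2), hence b2 > a2 ≥ a1 : contradiction
  have s2 : F (a1 + a2) < F (a1 + b2) := by
    have hle : F (a1 + a2) ≤ F (a1 + b2) :=
      (stmt10_clhigh hF (u := a2 + b1) (v := a1 + b2) (s := a1 + a2) (t := b1 + b2)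
        (by linarith) hbr (hσ ▸ hbr)).1
    exact lt_of_le_of_ne hle (stmt10_odd_even_ne c.o12 c.ea12).symm
  have : a2 < b2 := by
    have := stmt10_mono_lt hF s2
    linarith
  linarith [c.ha12]

/-- Both parts have their two largest nonedge `F`-values equal, and the same bottom
value: impossible. -/
lemma stmt10_BoBo (c : Stmt10Cfg F a1 a2 a3 b1 b2 b3)
    (hA : F (a1 + a3) = F (a2 + a3)) (hB : F (b1 + b3) = F (b2 + b3))
    (hσ : F (a1 + a2) = F (b1 + b2)) : False := by
  have hF := c.mono
  rcases lt_trichotomy (F (a2 + b1)) (F (a1 + a2)) with hbr | heq | hbr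
  · exact stmt10_BoBo_aux c hB hσ hbr
  · exact stmt10_odd_even_ne c.o21 c.ea12 heq
  · have hlt : F (a1 + b2) < F (b1 + b2) := by
      have hle : F (a1 + b2) ≤ F (a1 + a2) :=
        (stmt10_cllow hF (u := a2 + b1) (v := a1 + b2) (s := a1 + a2) (t := b1 + b2)
          (by linarith) hbr (hσ ▸ hbr)).1
      rw [hσ] at hle
      exact lt_of_le_of_ne hle (stmt10_odd_even_ne c.o12 c.eb12)
    refine stmt10_BoBo_aux c.swap hA hσ.symm ?_
    rw [add_comm b2 a1]
    exact hlt

/-- Part `a` has its two smallest nonedge `F`-values equal (minority on top),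
part `b` has its two largest equal (minority at bottom), with the same minority
value: impossible. -/
lemma stmt10_TBo (c : Stmt10Cfg F a1 a2 a3 b1 b2 b3)
    (hA : F (a1 + a2) = F (a1 + a3)) (hB : F (b1 + b3) = F (b2 + b3))
    (hσ : F (a2 + a3) = F (b1 + b2)) : False := by
  have hF := c.mono
  rcases lt_trichotomy (F (a2 + b2)) (F (a2 + a3)) with hbr | heq | hbr
  · -- branch i
    have ha2b1 : a2 < b1 := by
      have : F (a2 + b2) < F (b1 + b2) := hσ ▸ hbr
      have := stmt10_mono_lt hF this
      linarith
    have s1 : F (b1 + b2) < F (a3 + b1) := by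
      have hle : F (b1 + b2) ≤ F (a3 + b1) :=
        (stmt10_clhigh hF (u := a2 + b2) (v := a3 + b1) (s := a2 + a3) (t := b1 + b2)
          (by linarith) hbr (hσ ▸ hbr)).2
      exact lt_of_le_of_ne hle (stmt10_odd_even_ne c.o31 c.eb12).symm
    have s2 : F (a1 + b2) < F (a1 + a2) := by
      have hle : F (a1 + b2) ≤ F (a1 + a3) :=
        (stmt10_cllow hF (u := a3 + b1) (v := a1 + b2) (s := a1 + a3) (t := b1 + b2)
          (by linarith)
          (lt_of_le_of_lt (le_trans (hF (by linarith [c.ha12])) (le_of_eq hσ)) s1)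
          s1).1
      rw [← hA] at hle
      exact lt_of_le_of_ne hle (stmt10_odd_even_ne c.o12 c.ea12)
    have : b2 < a2 := by
      have := stmt10_mono_lt hF s2
      linarith
    linarith [c.hb12]
  · exact stmt10_odd_even_ne c.o22 c.ea23 heq
  · -- branch ii
    have hb2a3 : a3 < b2 := by
      have := stmt10_mono_lt hF hbr
      linarith
    have hb1a2 : b1 < a2 := by
      have s1 : F (a3 + b1) < F (a2 + a3) := by
        have hle : F (a3 + b1) ≤ F (a2 + a3) :=
          (stmt10_cllow hF (u := a2 + b2) (v := a3 + b1) (s := a2 + a3) (t := b1 + b2)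
            (by linarith) hbr (hσ ▸ hbr)).1
        exact lt_of_le_of_ne hle (stmt10_odd_even_ne c.o31 c.ea23)
      have := stmt10_mono_lt hF s1
      linarith
    have s2 : F (a3 + b3) < F (b1 + b3) := by
      have hle : F (a3 + b3) ≤ F (b2 + b3) := hF (by linarith)
      rw [← hB] at hle
      exact lt_of_le_of_ne hle (stmt10_odd_even_ne c.o33 c.eb13)
    have : a3 < b1 := by
      have := stmt10_mono_lt hF s2
      linarith
    linarith [c.ha23]

end Master

/-- If in some representation of `K_{n×3}` the nonedges are colored with at most `m`
colors, then `n ≤ m + C(m,3)`; in particular, if `K_{n×3}` is a `k`-threshold graph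
then `n ≤ ⌈(k+1)/2⌉ + C(⌈(k+1)/2⌉, 3)`. -/
theorem stmt10 :
    (∀ (n k m : ℕ) (θ : Fin k → ℝ) (r : Fin n × Fin 3 → ℝ),
      IsRep (completeMulti n 3) θ r →
      (∃ C : Finset ℕ, C.card ≤ m ∧
        ∀ (t : Fin n) (a b : Fin 3), a ≠ b → nonedgeColor θ (r (t, a) + r (t, b)) ∈ C) →
      n ≤ m + Nat.choose m 3) ∧
    (∀ n k : ℕ, IsKThreshold (completeMulti n 3) k →
      n ≤ (k + 2) / 2 + Nat.choose ((k + 2) / 2) 3) := by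
  have main : ∀ (n k m : ℕ) (θ : Fin k → ℝ) (r : Fin n × Fin 3 → ℝ),
      IsRep (completeMulti n 3) θ r →
      (∃ C : Finset ℕ, C.card ≤ m ∧
        ∀ (t : Fin n) (a b : Fin 3), a ≠ b → nonedgeColor θ (r (t, a) + r (t, b)) ∈ C) →
      n ≤ m + Nat.choose m 3 := by
    intro n k m θ r hrep hCex
    obtain ⟨C, hCcard, hCmem⟩ := hCex
    classical
    set F : ℝ → ℕ := fun s => (Finset.univ.filter (fun i => θ i ≤ s)).card with hFdef
    have hFmono : Monotone F := by
      intro x y hxy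
      apply Finset.card_le_card
      intro i hi
      simp only [Finset.mem_filter, Finset.mem_univ, true_and] at hi ⊢
      exact hi.trans hxy
    have hnonedge : ∀ (t : Fin n) (x y : Fin 3), x ≠ y →
        Even (F (r (t, x) + r (t, y))) := by
      intro t x y hxy
      have hne : ((t, x) : Fin n × Fin 3) ≠ (t, y) := by
        simp only [ne_eq, Prod.mk.injEq, true_and]
        exact hxy
      rw [← Nat.not_odd_iff_even]
      intro hodd
      have hadj : (completeMulti n 3).Adj (t, x) (t, y) := (hrep.2 _ _ hne).mpr hodd
      exact hadj rfl
    have hedge : ∀ (s t : Fin n), s ≠ t → ∀ (x y : Fin 3),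
        Odd (F (r (s, x) + r (t, y))) := by
      intro s t hst x y
      have hne : ((s, x) : Fin n × Fin 3) ≠ (t, y) := fun h => hst (congrArg Prod.fst h)
      exact (hrep.2 (s, x) (t, y) hne).mp (by exact hst)
    choose I J L hIJ hIL hJL hs1 hs2 using fun t : Fin n => stmt10_sort3 (fun a => r (t, a))
    set A1 : Fin n → ℝ := fun t => r (t, I t) with hA1def
    set A2 : Fin n → ℝ := fun t => r (t, J t) with hA2def
    set A3 : Fin n → ℝ := fun t => r (t, L t) with hA3def
    have hA12 : ∀ t, A1 t ≤ A2 t := hs1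
    have hA23 : ∀ t, A2 t ≤ A3 t := hs2
    have e12 : ∀ t, Even (F (A1 t + A2 t)) := fun t => hnonedge t (I t) (J t) (hIJ t)
    have e13 : ∀ t, Even (F (A1 t + A3 t)) := fun t => hnonedge t (I t) (L t) (hIL t)
    have e23 : ∀ t, Even (F (A2 t + A3 t)) := fun t => hnonedge t (J t) (L t) (hJL t)
    set c1 : Fin n → ℕ := fun t => F (A1 t + A2 t) / 2 + 1 with hc1def
    set c2 : Fin n → ℕ := fun t => F (A1 t + A3 t) / 2 + 1 with hc2def
    set c3 : Fin n → ℕ := fun t => F (A2 t + A3 t) / 2 + 1 with hc3def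
    have hc1C : ∀ t, c1 t ∈ C := fun t => hCmem t (I t) (J t) (hIJ t)
    have hc2C : ∀ t, c2 t ∈ C := fun t => hCmem t (I t) (L t) (hIL t)
    have hc3C : ∀ t, c3 t ∈ C := fun t => hCmem t (J t) (L t) (hJL t)
    have hc12 : ∀ t, c1 t ≤ c2 t := fun t =>
      Nat.succ_le_succ (Nat.div_le_div_right (hFmono (by linarith [hA23 t])))
    have hc23 : ∀ t, c2 t ≤ c3 t := fun t =>
      Nat.succ_le_succ (Nat.div_le_div_right (hFmono (by linarith [hA12 t])))
    set f : Fin n → ℕ ⊕ Finset ℕ := fun t =>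
      if c2 t = c3 t then Sum.inl (c1 t)
      else if c1 t = c2 t then Sum.inl (c3 t)
      else Sum.inr {c1 t, c2 t, c3 t} with hfdef
    have hmaps : ∀ t : Fin n, f t ∈ C.disjSum (C.powersetCard 3) := by
      intro t
      rw [hfdef]
      simp only
      split_ifs with h1 h2
      · exact Finset.inl_mem_disjSum.mpr (hc1C t)
      · exact Finset.inl_mem_disjSum.mpr (hc3C t)
      · refine Finset.inr_mem_disjSum.mpr (Finset.mem_powersetCard.mpr ⟨?_, ?_⟩)
        · intro x hx
          simp only [Finset.mem_insert, Finset.mem_singleton] at hx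
          rcases hx with h | h | h
          · exact h ▸ hc1C t
          · exact h ▸ hc2C t
          · exact h ▸ hc3C t
        · have l12 : c1 t < c2 t := lt_of_le_of_ne (hc12 t) h2
          have l23 : c2 t < c3 t := lt_of_le_of_ne (hc23 t) h1
          exact Finset.card_eq_three.mpr
            ⟨c1 t, c2 t, c3 t, by omega, by omega, by omega, rfl⟩
    have hinj : Set.InjOn f (Finset.univ : Finset (Fin n)) := by
      intro s hs t ht hfe
      by_contra hst
      have cfg : Stmt10Cfg F (A1 s) (A2 s) (A3 s) (A1 t) (A2 t) (A3 t) :=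
        { mono := hFmono
          ha12 := hA12 s
          ha23 := hA23 s
          hb12 := hA12 t
          hb23 := hA23 t
          ea12 := e12 s
          ea13 := e13 s
          ea23 := e23 s
          eb12 := e12 t
          eb13 := e13 t
          eb23 := e23 t
          o12 := hedge s t hst (I s) (J t)
          o13 := hedge s t hst (I s) (L t)
          o21 := hedge s t hst (J s) (I t)
          o22 := hedge s t hst (J s) (J t)
          o23 := hedge s t hst (J s) (L t)
          o31 := hedge s t hst (L s) (I t)
          o32 := hedge s t hst (L s) (J t)
          o33 := hedge s t hst (L s) (L t) }
      replace hfe :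
          (if c2 s = c3 s then Sum.inl (c1 s)
            else if c1 s = c2 s then Sum.inl (c3 s)
            else Sum.inr {c1 s, c2 s, c3 s} : ℕ ⊕ Finset ℕ) =
          (if c2 t = c3 t then Sum.inl (c1 t)
            else if c1 t = c2 t then Sum.inl (c3 t)
            else Sum.inr {c1 t, c2 t, c3 t}) := hfe
      by_cases hSa : c2 s = c3 s
      · rw [if_pos hSa] at hfe
        by_cases hTa : c2 t = c3 t
        · -- Bo' Bo'
          rw [if_pos hTa, Sum.inl.injEq] at hfe
          exact stmt10_BoBo cfg
            (stmt10_even_eq_of_color (e13 s) (e23 s) hSa)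
            (stmt10_even_eq_of_color (e13 t) (e23 t) hTa)
            (stmt10_even_eq_of_color (e12 s) (e12 t) hfe)
        · rw [if_neg hTa] at hfe
          by_cases hTb : c1 t = c2 t
          · -- Bo' T'
            rw [if_pos hTb, Sum.inl.injEq] at hfe
            exact stmt10_TBo cfg.swap
              (stmt10_even_eq_of_color (e12 t) (e13 t) hTb)
              (stmt10_even_eq_of_color (e13 s) (e23 s) hSa)
              (stmt10_even_eq_of_color (e23 t) (e12 s) hfe.symm)
          · rw [if_neg hTb] at hfe
            simp at hfe
      · rw [if_neg hSa] at hfe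
        by_cases hSb : c1 s = c2 s
        · rw [if_pos hSb] at hfe
          by_cases hTa : c2 t = c3 t
          · -- T' Bo'
            rw [if_pos hTa, Sum.inl.injEq] at hfe
            exact stmt10_TBo cfg
              (stmt10_even_eq_of_color (e12 s) (e13 s) hSb)
              (stmt10_even_eq_of_color (e13 t) (e23 t) hTa)
              (stmt10_even_eq_of_color (e23 s) (e12 t) hfe)
          · rw [if_neg hTa] at hfe
            by_cases hTb : c1 t = c2 t
            · -- T' T'
              rw [if_pos hTb, Sum.inl.injEq] at hfe
              exact stmt10_TT cfg
                (stmt10_even_eq_of_color (e12 s) (e13 s) hSb)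
                (stmt10_even_eq_of_color (e12 t) (e13 t) hTb)
                (stmt10_even_eq_of_color (e23 s) (e23 t) hfe)
            · rw [if_neg hTb] at hfe
              simp at hfe
        · rw [if_neg hSb] at hfe
          by_cases hTa : c2 t = c3 t
          · rw [if_pos hTa] at hfe
            simp at hfe
          · rw [if_neg hTa] at hfe
            by_cases hTb : c1 t = c2 t
            · rw [if_pos hTb] at hfe
              simp at hfe
            · -- rainbow rainbow
              rw [if_neg hTb, Sum.inr.injEq] at hfe
              have ls12 : c1 s < c2 s := lt_of_le_of_ne (hc12 s) hSb
              have ls23 : c2 s < c3 s := lt_of_le_of_ne (hc23 s) hSa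
              have lt12 : c1 t < c2 t := lt_of_le_of_ne (hc12 t) hTb
              have lt23 : c2 t < c3 t := lt_of_le_of_ne (hc23 t) hTa
              have hx := Finset.ext_iff.mp hfe
              have q1 := hx (c1 s)
              have q2 := hx (c2 s)
              have q3 := hx (c3 s)
              have q4 := hx (c1 t)
              have q5 := hx (c2 t)
              have q6 := hx (c3 t)
              simp only [Finset.mem_insert, Finset.mem_singleton, eq_self_iff_true,
                true_or, or_true, true_iff, iff_true] at q1 q2 q3 q4 q5 q6
              have w1 : c1 s = c1 t := by
                rcases q1 with h | h | h <;> rcases q4 with h' | h' | h' <;> omega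
              have w3 : c3 s = c3 t := by
                rcases q3 with h | h | h <;> rcases q6 with h' | h' | h' <;> omega
              have w2 : c2 s = c2 t := by
                rcases q2 with h | h | h <;> rcases q5 with h' | h' | h' <;> omega
              exact stmt10_eqT cfg
                (stmt10_even_eq_of_color (e12 s) (e12 t) w1)
                (stmt10_even_eq_of_color (e13 s) (e13 t) w2)
                (stmt10_even_eq_of_color (e23 s) (e23 t) w3)
    have hcard := Finset.card_le_card_of_injOn f (fun t _ => hmaps t) hinj
    rw [Finset.card_univ, Fintype.card_fin, Finset.card_disjSum,
      Finset.card_powersetCard] at hcard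
    exact hcard.trans (Nat.add_le_add hCcard (Nat.choose_le_choose 3 hCcard))
  refine ⟨main, ?_⟩
  intro n k hk
  obtain ⟨θ, r, hrep⟩ := hk
  refine main n k ((k + 2) / 2) θ r hrep ⟨Finset.Icc 1 ((k + 2) / 2), ?_, ?_⟩
  · rw [Nat.card_Icc]
    omega
  · intro t a b hab
    have hne : ((t, a) : Fin n × Fin 3) ≠ (t, b) := by
      simp only [ne_eq, Prod.mk.injEq, true_and]
      exact hab
    have heven : Even ((Finset.univ.filter
        (fun i => θ i ≤ r (t, a) + r (t, b))).card) := by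
      rw [← Nat.not_odd_iff_even]
      intro hodd
      have hadj : (completeMulti n 3).Adj (t, a) (t, b) := (hrep.2 _ _ hne).mpr hodd
      exact hadj rfl
    have hle : (Finset.univ.filter (fun i => θ i ≤ r (t, a) + r (t, b))).card ≤ k := by
      refine le_trans (Finset.card_filter_le _ _) ?_
      simp
    rw [nonedgeColor, Finset.mem_Icc]
    rcases heven with ⟨p, hp⟩
    omega
end

section
/- In any (θ₁, θ₂, …, θ_{2m−1})-representation of nK₃ with θ₁ < θ₂ < ⋯ < θ_{2m−1}, at most one triangle contains an edge of color m, i.e., at most one triangle contains an edge uv with r_u + r_v ≥ θ_{2m−1}. -/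
open Finset

/-- In any `(θ₁, …, θ_{2m-1})`-representation of `nK₃`, at most one triangle
contains an edge `uv` with `r_u + r_v ≥ θ_{2m-1}` (i.e. of color `m`). -/
theorem stmt11 (n m : ℕ) (hm : 1 ≤ m) (θ : Fin (2 * m - 1) → ℝ)
    (r : Fin n × Fin 3 → ℝ) (hrep : IsRep (copiesK n 3) θ r)
    (t₁ t₂ : Fin n)
    (h₁ : ∃ a b : Fin 3, a ≠ b ∧ θ ⟨2 * m - 2, by omega⟩ ≤ r (t₁, a) + r (t₁, b))
    (h₂ : ∃ a b : Fin 3, a ≠ b ∧ θ ⟨2 * m - 2, by omega⟩ ≤ r (t₂, a) + r (t₂, b)) :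
    t₁ = t₂ := by
  by_contra hne
  obtain ⟨θmono, hadj⟩ := hrep
  obtain ⟨a, b, hab, hs1⟩ := h₁
  obtain ⟨c, d, hcd, hs2⟩ := h₂
  have key : ∀ u v : Fin n × Fin 3, u.1 ≠ v.1 →
      r u + r v < θ ⟨2 * m - 2, by omega⟩ := by
    intro u v huv
    by_contra hle
    push_neg at hle
    have hall : (Finset.univ.filter (fun i => θ i ≤ r u + r v)) = Finset.univ := by
      ext i
      simp only [Finset.mem_filter, Finset.mem_univ, true_and, iff_true]
      have hi := i.isLt
      refine le_trans (θmono.monotone (show i ≤ ⟨2 * m - 2, by omega⟩ from ?_)) hle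
      rw [Fin.le_def]
      show (i : ℕ) ≤ 2 * m - 2
      omega
    have hodd : Odd (Finset.univ.filter (fun i => θ i ≤ r u + r v)).card := by
      rw [hall, Finset.card_univ, Fintype.card_fin]
      exact ⟨m - 1, by omega⟩
    have hA : (copiesK n 3).Adj u v :=
      (hadj u v (fun h => huv (congrArg Prod.fst h))).mpr hodd
    exact huv hA.1
  have k1 := key (t₁, a) (t₂, c) hne
  have k2 := key (t₁, b) (t₂, d) hne
  linarith
end

section
/- In any (θ₁, θ₂, …, θ_m)-representation of K_{n×3} with θ₁ < θ₂ < ⋯ < θ_m, at most one part contains a nonedge of color 1, i.e., at most one part contains a nonedge xy with r_x + r_y < θ₁. -/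
open Finset

/-- In any `(θ₁, …, θ_m)`-representation of `K_{n×3}`, at most one part contains
a nonedge `xy` with `r_x + r_y < θ₁` (i.e. of color `1`). -/
theorem stmt12 (n m : ℕ) (hm : 1 ≤ m) (θ : Fin m → ℝ)
    (r : Fin n × Fin 3 → ℝ) (hrep : IsRep (completeMulti n 3) θ r)
    (t₁ t₂ : Fin n)
    (h₁ : ∃ a b : Fin 3, a ≠ b ∧ r (t₁, a) + r (t₁, b) < θ ⟨0, by omega⟩)
    (h₂ : ∃ a b : Fin 3, a ≠ b ∧ r (t₂, a) + r (t₂, b) < θ ⟨0, by omega⟩) :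
    t₁ = t₂ := by
  by_contra hne
  obtain ⟨a, b, hab, h1⟩ := h₁
  obtain ⟨c, d, hcd, h2⟩ := h₂
  have key : ∀ (x y : Fin 3), θ ⟨0, by omega⟩ ≤ r (t₁, x) + r (t₂, y) := by
    intro x y
    have hadj : (completeMulti n 3).Adj (t₁, x) (t₂, y) := hne
    have hne' : ((t₁, x) : Fin n × Fin 3) ≠ (t₂, y) := by
      intro h; exact hne (congrArg Prod.fst h)
    have hodd := (hrep.2 _ _ hne').mp hadj
    have hpos : 0 < (Finset.univ.filter
        (fun i => θ i ≤ r (t₁, x) + r (t₂, y))).card := by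
      rcases hodd with ⟨j, hj⟩; omega
    obtain ⟨i, hi⟩ := Finset.card_pos.mp hpos
    exact le_trans (hrep.1.monotone (by simp [Fin.le_def]))
      (Finset.mem_filter.mp hi).2
  have k1 := key a c
  have k2 := key a d
  have k3 := key b c
  have k4 := key b d
  linarith
end

section
/- In any (θ₁, θ₂, …, θ_{2m})-representation of K_{n×3} with θ₁ < θ₂ < ⋯ < θ_{2m}, at most one part contains a nonedge of color m+1, i.e., at most one part contains a nonedge xy with r_x + r_y ≥ θ_{2m}. -/
open Finset

/-- In any `(θ₁, …, θ_{2m})`-representation of `K_{n×3}`, at most one part contains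
a nonedge `xy` with `r_x + r_y ≥ θ_{2m}` (i.e. of color `m+1`). -/
theorem stmt13 (n m : ℕ) (hm : 1 ≤ m) (θ : Fin (2 * m) → ℝ)
    (r : Fin n × Fin 3 → ℝ) (hrep : IsRep (completeMulti n 3) θ r)
    (t₁ t₂ : Fin n)
    (h₁ : ∃ a b : Fin 3, a ≠ b ∧ θ ⟨2 * m - 1, by omega⟩ ≤ r (t₁, a) + r (t₁, b))
    (h₂ : ∃ a b : Fin 3, a ≠ b ∧ θ ⟨2 * m - 1, by omega⟩ ≤ r (t₂, a) + r (t₂, b)) :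
    t₁ = t₂ := by
  by_contra hne
  obtain ⟨a, b, hab, h1⟩ := h₁
  obtain ⟨c, d, hcd, h2⟩ := h₂
  obtain ⟨hmono, hadj⟩ := hrep
  set L : Fin (2 * m) := ⟨2 * m - 1, by omega⟩ with hL
  have hx : θ L ≤ 2 * r (t₁, a) ∨ θ L ≤ 2 * r (t₁, b) := by
    by_contra h; push_neg at h; linarith [h.1, h.2]
  have hy : θ L ≤ 2 * r (t₂, c) ∨ θ L ≤ 2 * r (t₂, d) := by
    by_contra h; push_neg at h; linarith [h.1, h.2]
  obtain ⟨x, hxr⟩ : ∃ x, θ L ≤ 2 * r (t₁, x) := hx.elim (⟨a, ·⟩) (⟨b, ·⟩)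
  obtain ⟨y, hyr⟩ : ∃ y, θ L ≤ 2 * r (t₂, y) := hy.elim (⟨c, ·⟩) (⟨d, ·⟩)
  have hsum : θ L ≤ r (t₁, x) + r (t₂, y) := by linarith
  have hneq : ((t₁, x) : Fin n × Fin 3) ≠ (t₂, y) := by
    intro h; exact hne (congrArg Prod.fst h)
  have hAdj : (completeMulti n 3).Adj (t₁, x) (t₂, y) := hne
  have hodd := (hadj _ _ hneq).mp hAdj
  have hall : (Finset.univ.filter (fun i => θ i ≤ r (t₁, x) + r (t₂, y))) = Finset.univ := by
    apply Finset.eq_univ_iff_forall.mpr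
    intro i
    simp only [Finset.mem_filter, Finset.mem_univ, true_and]
    refine le_trans (hmono.monotone ?_) hsum
    exact Fin.le_def.mpr (by have := i.isLt; simp [hL]; omega)
  rw [hall, Finset.card_univ, Fintype.card_fin] at hodd
  rcases hodd with ⟨j, hj⟩
  omega
end

section
/- Let {a₁, a₂, …, a_m} ⊂ ℝ be a set of reals that is linearly independent over ℚ. Suppose i, j, k ∈ {1, …, m} are either all equal or all distinct, r, s, t ∈ {1, …, m} are either all equal or all distinct, and the multisets {i, j, k} and {r, s, t} are different. Then for every ℓ ∈ {1, …, m}, (a_i + a_j − a_k)/2 + (a_r + a_s − a_t)/2 ≠ a_ℓ. Consequently, in an {a₁, …, a_m}-assignment of nK₃, the edge rank sums and the nonedge rank sums do not coincide. -/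
open Finset

/-- The multiset of the three edge rank sums of the `t`-th triangle of `nK₃`. -/
def triSums3 {n : ℕ} (r : Fin n × Fin 3 → ℝ) (t : Fin n) : Multiset ℝ :=
  {r (t, 0) + r (t, 1), r (t, 0) + r (t, 2), r (t, 1) + r (t, 2)}

/-- `r` is an `{a₁, …, a_m}`-assignment of `nK₃`: each triangle has edge rank sums
`a_i, a_i, a_i` or `a_i, a_j, a_k` with `i, j, k` distinct, and no two triangles have
the same multiset of edge rank sums. -/
def IsAssignment3 {m n : ℕ} (a : Fin m → ℝ) (r : Fin n × Fin 3 → ℝ) : Prop :=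
  (∀ t : Fin n, ∃ i j k : Fin m,
      ((i = j ∧ j = k) ∨ (i ≠ j ∧ i ≠ k ∧ j ≠ k)) ∧
      triSums3 r t = {a i, a j, a k}) ∧
  ∀ t₁ t₂ : Fin n, t₁ ≠ t₂ → triSums3 r t₁ ≠ triSums3 r t₂


section Aux
variable {β : Type*}

lemma ms_swap12 (x y z : β) : ({x,y,z} : Multiset β) = {y,x,z} := Multiset.cons_swap x y {z}

lemma ms_swap23 (x y z : β) : ({x,y,z} : Multiset β) = {x,z,y} := by
  show x ::ₘ y ::ₘ z ::ₘ 0 = x ::ₘ z ::ₘ y ::ₘ 0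
  rw [Multiset.cons_swap y z]

lemma ms_rev (x y z : β) : ({x,y,z} : Multiset β) = {z,y,x} := by
  show x ::ₘ y ::ₘ z ::ₘ 0 = z ::ₘ y ::ₘ x ::ₘ 0
  rw [Multiset.cons_swap y z, Multiset.cons_swap x z, Multiset.cons_swap x y]

lemma ms_cycL (x y z : β) : ({x,y,z} : Multiset β) = {y,z,x} := by
  rw [ms_swap12, ms_swap23]

lemma ms_cycR (x y z : β) : ({x,y,z} : Multiset β) = {z,x,y} := by
  rw [ms_swap23, ms_swap12]

lemma pair_eq (x1 x2 y1 y2 : β) (h : ({x1,x2} : Multiset β) = {y1,y2}) :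
    (x1=y1∧x2=y2) ∨ (x1=y2∧x2=y1) := by
  rcases Multiset.cons_eq_cons.mp h with ⟨h1, h2⟩ | ⟨hne, cs, h1, h2⟩
  · exact Or.inl ⟨h1, Multiset.singleton_inj.mp h2⟩
  · have hcs : cs = 0 := by
      have := congrArg Multiset.card h1
      simp at this
      first | exact this | exact this.symm
    subst hcs
    simp only [Multiset.cons_zero] at h1 h2
    exact Or.inr ⟨(Multiset.singleton_inj.mp h2).symm, Multiset.singleton_inj.mp h1⟩

lemma three_eq (x1 x2 x3 y1 y2 y3 : β) (h : ({x1,x2,x3} : Multiset β) = {y1,y2,y3}) :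
    (x1=y1∧x2=y2∧x3=y3) ∨ (x1=y1∧x2=y3∧x3=y2) ∨ (x1=y2∧x2=y1∧x3=y3) ∨
    (x1=y2∧x2=y3∧x3=y1) ∨ (x1=y3∧x2=y1∧x3=y2) ∨ (x1=y3∧x2=y2∧x3=y1) := by
  rcases Multiset.cons_eq_cons.mp h with ⟨h1, h2⟩ | ⟨hne, cs, h1, h2⟩
  · rcases pair_eq _ _ _ _ h2 with ⟨e1,e2⟩|⟨e1,e2⟩
    · exact Or.inl ⟨h1,e1,e2⟩
    · exact Or.inr (Or.inl ⟨h1,e1,e2⟩)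
  · obtain ⟨c, rfl⟩ : ∃ c, cs = {c} := by
      have := congrArg Multiset.card h1
      simp at this
      first | exact Multiset.card_eq_one.mp this | exact Multiset.card_eq_one.mp this.symm
    rcases pair_eq _ _ _ _ h1 with ⟨e1,e2⟩|⟨e1,e2⟩ <;>
      rcases pair_eq _ _ _ _ h2 with ⟨f1,f2⟩|⟨f1,f2⟩
    · exact Or.inr (Or.inr (Or.inl ⟨f1.symm, e1, e2.trans f2.symm⟩))
    · exact Or.inr (Or.inr (Or.inr (Or.inr (Or.inl ⟨f2.symm, e1, e2.trans f1.symm⟩))))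
    · exact Or.inr (Or.inr (Or.inr (Or.inl ⟨f1.symm, e1.trans f2.symm, e2⟩)))
    · exact Or.inr (Or.inr (Or.inr (Or.inr (Or.inr ⟨f2.symm, e1.trans f1.symm, e2⟩))))

variable {β : Type*}

def Sh3 (i j k : β) : Prop := (i = j ∧ j = k) ∨ (i ≠ j ∧ i ≠ k ∧ j ≠ k)

lemma sh_swap23 {i j k : β} (h : Sh3 i j k) : Sh3 i k j := by
  rcases h with ⟨h1,h2⟩|⟨h1,h2,h3⟩
  · exact Or.inl ⟨h1.trans h2, h2.symm⟩
  · exact Or.inr ⟨h2, h1, fun e => h3 e.symm⟩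

lemma sh_swap12 {i j k : β} (h : Sh3 i j k) : Sh3 j i k := by
  rcases h with ⟨h1,h2⟩|⟨h1,h2,h3⟩
  · exact Or.inl ⟨h1.symm, h1.trans h2⟩
  · exact Or.inr ⟨fun e => h1 e.symm, h3, h2⟩

lemma sh_cycL {i j k : β} (h : Sh3 i j k) : Sh3 j k i := by
  rcases h with ⟨h1,h2⟩|⟨h1,h2,h3⟩
  · exact Or.inl ⟨h2, (h1.trans h2).symm⟩
  · exact Or.inr ⟨h3, fun e => h1 e.symm, fun e => h2 e.symm⟩

lemma sh_cycR {i j k : β} (h : Sh3 i j k) : Sh3 k i j := sh_cycL (sh_cycL h)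

lemma sh_rev {i j k : β} (h : Sh3 i j k) : Sh3 k j i := sh_swap23 (sh_cycR h)

section key
variable [DecidableEq β]

lemma leafQ (j q l : β)
    (hc : ∀ v, (if j = v then (1:ℚ) else 0) + (if q = v then 1 else 0)
      - 2 * (if l = v then 1 else 0) = 0) : q = j := by
  have h1 := hc j
  by_cases h2 : q = j <;> by_cases h3 : l = j <;> simp [h2, h3] at h1 <;>
    first | exact h2 | linarith

lemma key_ed (i p q t l : β) (hpq : p ≠ q) (hpt : p ≠ t) (hqt : q ≠ t)
    (hc : ∀ v, (if i = v then (1:ℚ) else 0) + (if p = v then 1 else 0)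
      + (if q = v then 1 else 0) - (if t = v then 1 else 0)
      - 2 * (if l = v then 1 else 0) = 0) : False := by
  have h1 := hc p
  have hip : i = p := by
    by_cases hip : i = p <;> by_cases hlp : l = p <;>
      simp [hip, hlp, Ne.symm hpq, Ne.symm hpt] at h1 <;> first | exact hip | linarith
  subst hip
  have h2 := hc q
  by_cases hlq : l = q <;> simp [hpq, Ne.symm hqt, hlq] at h2 <;> linarith

lemma key (i j k p q t l : β)
    (h1 : Sh3 i j k) (h2 : Sh3 p q t)
    (hc : ∀ v, (if i = v then (1:ℚ) else 0) + (if j = v then 1 else 0)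
      - (if k = v then 1 else 0) + (if p = v then 1 else 0) + (if q = v then 1 else 0)
      - (if t = v then 1 else 0) - 2 * (if l = v then 1 else 0) = 0) :
    ({i,j,k} : Multiset β) = {p,q,t} := by
  rcases h1 with ⟨hij,hjk⟩|⟨hij,hik,hjk⟩ <;> rcases h2 with ⟨hpq,hqt⟩|⟨hpq,hpt,hqt⟩
  · -- both all-equal
    subst hij; subst hjk; subst hpq; subst hqt
    have h1 := hc i
    by_cases hpi : p = i <;> by_cases hli : l = i <;> simp [hpi, hli] at h1
    · subst hpi; rfl
    all_goals linarith
  · exact absurd (key_ed i p q t l hpq hpt hqt (fun v => by subst hij; subst hjk; linarith [hc v])) (fun h => h)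
  · exact absurd (key_ed p i j k l hij hik hjk (fun v => by subst hpq; subst hqt; linarith [hc v])) (fun h => h)
  · -- both distinct
    have hPQ : p = k ∨ q = k := by
      by_cases hp : p = k
      · exact Or.inl hp
      by_cases hq : q = k
      · exact Or.inr hq
      exfalso
      have h1 := hc k
      by_cases ht : t = k <;> by_cases hl : l = k <;>
        simp [hik, hjk, hp, hq, ht, hl] at h1 <;> linarith
    have hIJ : i = t ∨ j = t := by
      by_cases hi : i = t
      · exact Or.inl hi
      by_cases hj : j = t
      · exact Or.inr hj
      exfalso
      have h1 := hc t
      by_cases hk : k = t <;> by_cases hl : l = t <;>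
        simp [hi, hj, hpt, hqt, hk, hl] at h1 <;> linarith
    rcases hPQ with hpk | hqk <;> rcases hIJ with hit | hjt
    · subst hpk; subst hit
      have hq : q = j := leafQ j q l (fun v => by linarith [hc v])
      subst hq
      exact ms_rev i q p
    · subst hpk; subst hjt
      have hq : q = i := leafQ i q l (fun v => by linarith [hc v])
      subst hq
      exact ms_cycR q j p
    · subst hqk; subst hit
      have hp : p = j := leafQ j p l (fun v => by linarith [hc v])
      subst hp
      exact ms_cycL i p q
    · subst hqk; subst hjt
      have hp : p = i := leafQ i p l (fun v => by linarith [hc v])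
      subst hp
      exact ms_swap23 p j q
end key

lemma sum_ind {m : ℕ} (a : Fin m → ℝ) (x : Fin m) :
    ∑ v, (if x = v then (1:ℚ) else 0) • a v = a x := by
  have : ∀ v : Fin m, (if x = v then (1:ℚ) else 0) • a v = if x = v then a v else 0 := by
    intro v; split_ifs <;> simp
  rw [Finset.sum_congr rfl (fun v _ => this v)]
  simp

lemma part1 {m : ℕ} (a : Fin m → ℝ) (ha : LinearIndependent ℚ a)
    (i j k p q t : Fin m) (h1 : Sh3 i j k) (h2 : Sh3 p q t)
    (hne : ({i, j, k} : Multiset (Fin m)) ≠ {p, q, t}) (l : Fin m) :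
    (a i + a j - a k) / 2 + (a p + a q - a t) / 2 ≠ a l := by
  intro heq
  set c : Fin m → ℚ := fun v =>
    (if i = v then (1:ℚ) else 0) + (if j = v then 1 else 0)
      - (if k = v then 1 else 0) + (if p = v then 1 else 0) + (if q = v then 1 else 0)
      - (if t = v then 1 else 0) - 2 * (if l = v then 1 else 0) with hcdef
  have hsum : ∑ v, c v • a v = 0 := by
    simp only [hcdef, add_smul, sub_smul, mul_smul]
    simp only [Finset.sum_sub_distrib, Finset.sum_add_distrib]
    rw [← Finset.smul_sum]
    simp only [sum_ind]
    have h2 : (2:ℚ) • a l = 2 * a l := by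
      rw [Rat.smul_def]; norm_num
    rw [h2]
    linarith
  have hc := Fintype.linearIndependent_iff.mp ha c hsum
  exact hne (key i j k p q t l h1 h2 hc)

lemma tri_rep_aux {m n : ℕ} (a : Fin m → ℝ) (r : Fin n × Fin 3 → ℝ) (t : Fin n)
    (i j k x y z : Fin m) (hsh : Sh3 x y z) (hms : ({x,y,z} : Multiset (Fin m)) = {i,j,k})
    (e1 : r (t,0) + r (t,1) = a x) (e2 : r (t,0) + r (t,2) = a y)
    (e3 : r (t,1) + r (t,2) = a z) (c : Fin 3) :
    ∃ x' y' z' : Fin m, Sh3 x' y' z' ∧ ({x',y',z'} : Multiset (Fin m)) = {i,j,k} ∧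
      r (t, c) = (a x' + a y' - a z') / 2 := by
  fin_cases c
  · refine ⟨x, y, z, hsh, hms, ?_⟩
    show r (t, 0) = (a x + a y - a z) / 2
    linarith
  · refine ⟨x, z, y, sh_swap23 hsh, (ms_swap23 x y z).symm.trans hms, ?_⟩
    show r (t, 1) = (a x + a z - a y) / 2
    linarith
  · refine ⟨y, z, x, sh_cycL hsh, (ms_cycL x y z).symm.trans hms, ?_⟩
    show r (t, 2) = (a y + a z - a x) / 2
    linarith

lemma tri_rep {m n : ℕ} (a : Fin m → ℝ) (r : Fin n × Fin 3 → ℝ) (t : Fin n) (i j k : Fin m)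
    (hsh : Sh3 i j k) (h : triSums3 r t = {a i, a j, a k}) (c : Fin 3) :
    ∃ x y z : Fin m, Sh3 x y z ∧ ({x,y,z} : Multiset (Fin m)) = {i,j,k} ∧
      r (t, c) = (a x + a y - a z) / 2 := by
  unfold triSums3 at h
  rcases three_eq _ _ _ _ _ _ h with ⟨e1,e2,e3⟩|⟨e1,e2,e3⟩|⟨e1,e2,e3⟩|⟨e1,e2,e3⟩|⟨e1,e2,e3⟩|⟨e1,e2,e3⟩
  · exact tri_rep_aux a r t i j k i j k hsh rfl e1 e2 e3 c
  · exact tri_rep_aux a r t i j k i k j (sh_swap23 hsh) (ms_swap23 i j k).symm e1 e2 e3 c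
  · exact tri_rep_aux a r t i j k j i k (sh_swap12 hsh) (ms_swap12 i j k).symm e1 e2 e3 c
  · exact tri_rep_aux a r t i j k j k i (sh_cycL hsh) (ms_cycL i j k).symm e1 e2 e3 c
  · exact tri_rep_aux a r t i j k k i j (sh_cycR hsh) (ms_cycR i j k).symm e1 e2 e3 c
  · exact tri_rep_aux a r t i j k k j i (sh_rev hsh) (ms_rev i j k).symm e1 e2 e3 c

lemma part2 {m : ℕ} (a : Fin m → ℝ) (ha : LinearIndependent ℚ a)
    (n : ℕ) (r : Fin n × Fin 3 → ℝ) (hA : IsAssignment3 a r)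
    (x y u v : Fin n × Fin 3) (hxy : x.1 ≠ y.1) (huv1 : u.1 = v.1) (huv2 : u ≠ v) :
    r x + r y ≠ r u + r v := by
  obtain ⟨iu, ju, ku, hshu, hequ⟩ := hA.1 u.1
  have hmem : r u + r v ∈ triSums3 r u.1 := by
    obtain ⟨tu, cu⟩ := u
    obtain ⟨tv, cv⟩ := v
    dsimp at huv1 ⊢
    subst huv1
    have hcc : cu ≠ cv := fun h => huv2 (by rw [h])
    fin_cases cu <;> fin_cases cv
    · exact absurd rfl hcc
    · show r (tu, 0) + r (tu, 1) ∈ triSums3 r tu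
      simp [triSums3]
    · show r (tu, 0) + r (tu, 2) ∈ triSums3 r tu
      simp [triSums3]
    · show r (tu, 1) + r (tu, 0) ∈ triSums3 r tu
      rw [add_comm]; simp [triSums3]
    · exact absurd rfl hcc
    · show r (tu, 1) + r (tu, 2) ∈ triSums3 r tu
      simp [triSums3]
    · show r (tu, 2) + r (tu, 0) ∈ triSums3 r tu
      rw [add_comm]; simp [triSums3]
    · show r (tu, 2) + r (tu, 1) ∈ triSums3 r tu
      rw [add_comm]; simp [triSums3]
    · exact absurd rfl hcc
  rw [hequ] at hmem
  simp at hmem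
  obtain ⟨l, hl⟩ : ∃ l, r u + r v = a l := by
    rcases hmem with h | h | h
    exacts [⟨iu, h⟩, ⟨ju, h⟩, ⟨ku, h⟩]
  obtain ⟨i1, j1, k1, hsh1, heq1⟩ := hA.1 x.1
  obtain ⟨i2, j2, k2, hsh2, heq2⟩ := hA.1 y.1
  obtain ⟨x1, y1, z1, hshx, hmsx, hrx⟩ := tri_rep a r x.1 i1 j1 k1 hsh1 heq1 x.2
  obtain ⟨x2, y2, z2, hshy, hmsy, hry⟩ := tri_rep a r y.1 i2 j2 k2 hsh2 heq2 y.2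
  have hdiff : ({x1, y1, z1} : Multiset (Fin m)) ≠ {x2, y2, z2} := by
    intro hEq
    apply hA.2 x.1 y.1 hxy
    have h1 : triSums3 r x.1 = Multiset.map a {x1, y1, z1} := by
      rw [hmsx]; simp only [Multiset.insert_eq_cons, Multiset.map_cons, Multiset.map_singleton]; exact heq1
    have h2 : triSums3 r y.1 = Multiset.map a {x2, y2, z2} := by
      rw [hmsy]; simp only [Multiset.insert_eq_cons, Multiset.map_cons, Multiset.map_singleton]; exact heq2
    rw [h1, h2, hEq]
  intro hcon
  exact part1 a ha x1 y1 z1 x2 y2 z2 hshx hshy hdiff l (by rw [← hrx, ← hry, hcon, hl])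

end Aux

/-- If `{a₁, …, a_m}` is linearly independent over `ℚ`, then for index triples
`i, j, k` and `r, s, t` that are each all equal or all distinct, with different
multisets, `(a_i + a_j - a_k)/2 + (a_r + a_s - a_t)/2 ≠ a_ℓ` for every `ℓ`;
consequently, in an `{a₁, …, a_m}`-assignment of `nK₃` the edge and nonedge rank
sums do not coincide. -/
theorem stmt14 (m : ℕ) (a : Fin m → ℝ) (ha : LinearIndependent ℚ a) :
    (∀ i j k p q t : Fin m,
      ((i = j ∧ j = k) ∨ (i ≠ j ∧ i ≠ k ∧ j ≠ k)) →
      ((p = q ∧ q = t) ∨ (p ≠ q ∧ p ≠ t ∧ q ≠ t)) →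
      ({i, j, k} : Multiset (Fin m)) ≠ {p, q, t} →
      ∀ l : Fin m, (a i + a j - a k) / 2 + (a p + a q - a t) / 2 ≠ a l) ∧
    (∀ (n : ℕ) (r : Fin n × Fin 3 → ℝ), IsAssignment3 a r →
      ∀ x y u v : Fin n × Fin 3, x.1 ≠ y.1 → u.1 = v.1 → u ≠ v →
        r x + r y ≠ r u + r v) := by
  constructor
  · intro i j k p q t h1 h2 hne l
    exact part1 a ha i j k p q t h1 h2 hne l
  · intro n r hA x y u v hxy huv1 huv2
    exact part2 a ha n r hA x y u v hxy huv1 huv2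
end

section
/- Let {N, a₁, a₂, …, a_M} ⊂ ℝ be linearly independent over ℚ and set b_i = N − a_i for i = 1, 2, …, M. Let A = {a₁, …, a_M} and B = {b₁, …, b_M}. If Σ_{i=1}^{S} α_i x_i + β N = 0, where each α_i ∈ ℤ, each x_i ∈ A ∪ B, and β ∈ ℚ, then Σ_{i=1}^{S} α_i is even. -/
open Finset

/-- If `{N, a₁, …, a_M}` is linearly independent over `ℚ`, `b_i = N - a_i`, and
`Σ α_i x_i + β N = 0` with `α_i ∈ ℤ`, `x_i ∈ A ∪ B`, `β ∈ ℚ`, then `Σ α_i` is even. -/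
theorem stmt19 (M : ℕ) (N : ℝ) (a : Fin M → ℝ)
    (hli : LinearIndependent ℚ (Fin.cons N a : Fin (M + 1) → ℝ))
    (b : Fin M → ℝ) (hb : ∀ i, b i = N - a i)
    (S : ℕ) (α : Fin S → ℤ) (x : Fin S → ℝ) (β : ℚ)
    (hx : ∀ i, x i ∈ Set.range a ∪ Set.range b)
    (heq : (∑ i, (α i : ℝ) * x i) + (β : ℝ) * N = 0) :
    Even (∑ i, α i) := by
  classical
  have hchoice : ∀ i, ∃ jj : Fin M, x i = a jj ∨ x i = N - a jj := by
    intro i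
    rcases hx i with ⟨jj, h⟩ | ⟨jj, h⟩
    · exact ⟨jj, Or.inl h.symm⟩
    · exact ⟨jj, Or.inr (by rw [← h, hb jj])⟩
  choose j hj using hchoice
  set e : Fin S → ℤ := fun i => if x i = N - a (j i) then 1 else 0 with he
  set sg : Fin S → ℤ := fun i => if x i = N - a (j i) then -1 else 1 with hsg
  have hrep : ∀ i, x i = (e i : ℝ) * N + (sg i : ℝ) * a (j i) := by
    intro i
    by_cases h : x i = N - a (j i)
    · simp [he, hsg, h]; ring
    · have hA := (hj i).resolve_right h
      simp only [he, hsg, if_neg h]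
      rw [hA]; push_cast; ring
  set g : Fin (M + 1) → ℚ :=
    Fin.cons (β + ∑ i, ((e i * α i : ℤ) : ℚ))
      (fun j' => ∑ i, (((if j i = j' then sg i * α i else 0) : ℤ) : ℚ)) with hg
  have hg0 : ∑ k, g k • (Fin.cons N a : Fin (M + 1) → ℝ) k = 0 := by
    rw [Fin.sum_univ_succ]
    simp only [hg, Fin.cons_zero, Fin.cons_succ]
    have h1 : ∀ j' : Fin M,
        ((∑ i, (((if j i = j' then sg i * α i else 0) : ℤ) : ℚ)) • a j')
          = ∑ i, (if j i = j' then ((sg i * α i : ℤ) : ℝ) * a j' else 0) := by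
      intro j'
      rw [Rat.smul_def]
      push_cast
      rw [Finset.sum_mul]
      congr 1; ext i
      split <;> simp
    simp only [h1]
    rw [Finset.sum_comm]
    have h2 : ∀ i, ∑ j' : Fin M, (if j i = j' then ((sg i * α i : ℤ) : ℝ) * a j' else 0)
        = ((sg i * α i : ℤ) : ℝ) * a (j i) := by
      intro i
      rw [Finset.sum_ite_eq]
      simp
    simp only [h2]
    have hL : ((β + ∑ i, ((e i * α i : ℤ) : ℚ)) • N)
        + ∑ i, ((sg i * α i : ℤ) : ℝ) * a (j i)
        = (∑ i, (α i : ℝ) * x i) + (β : ℝ) * N := by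
      rw [Rat.smul_def]
      push_cast
      have : ∀ i, (α i : ℝ) * x i
          = (e i : ℝ) * (α i : ℝ) * N + (sg i : ℝ) * (α i : ℝ) * a (j i) := by
        intro i; rw [hrep i]; ring
      simp only [this, Finset.sum_add_distrib, ← Finset.sum_mul]
      ring
    rw [hL, heq]
  have hz := Fintype.linearIndependent_iff.mp hli g hg0
  have hsum : ∑ i, sg i * α i = 0 := by
    have : ∀ j' : Fin M, (∑ i, (((if j i = j' then sg i * α i else 0) : ℤ) : ℚ)) = 0 := by
      intro j'
      have := hz j'.succ
      simpa [hg, Fin.cons_succ] using this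
    have htot : (∑ j' : Fin M, ∑ i, (((if j i = j' then sg i * α i else 0) : ℤ) : ℚ)) = 0 :=
      Finset.sum_eq_zero fun j' _ => this j'
    rw [Finset.sum_comm] at htot
    have h2 : ∀ i, ∑ j' : Fin M, (((if j i = j' then sg i * α i else 0) : ℤ) : ℚ)
        = ((sg i * α i : ℤ) : ℚ) := by
      intro i
      have : ∀ j' : Fin M, (((if j i = j' then sg i * α i else 0) : ℤ) : ℚ)
          = if j i = j' then ((sg i * α i : ℤ) : ℚ) else 0 := by
        intro j'; split <;> simp
      simp only [this, Finset.sum_ite_eq]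
      simp
    simp only [h2] at htot
    exact_mod_cast htot
  have : (∑ i, α i) = (∑ i, sg i * α i) + ∑ i, (α i - sg i * α i) := by
    rw [← Finset.sum_add_distrib]; simp
  rw [this, hsum, zero_add]
  apply Finset.even_sum
  intro i _
  by_cases h : x i = N - a (j i)
  · simp only [hsg, h, if_pos]
    exact ⟨α i, by ring⟩
  · simp [hsg, h]
end
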